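/- arXiv:2001.10927 — 6 statements merged into one kernel-verified Lean document; each statement's English description precedes it below -/
import Mathlib

section
/- The energy-transfer map Λ is an involution: for every pair (p,s) of a primary particle and a secondary particle, Λ(Λ(p,s)) = (p,s), and for every pair (s,p) of a secondary particle and a primary particle, Λ(Λ(s,p)) = (s,p). -/
/-- The energy transfer `Λ` on a (primary, secondary) pair:
`Λ((k,c), (k',c',c'')) = ((k' + ε c' c'', c, c'), (k − ε c c' − ε c' c'', c''))`. -/
def LamPS {C : Type*} (ε : C → C → ℤ) (p : ℤ × C) (s : ℤ × C × C) :
    (ℤ × C × C) × (ℤ × C) :=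
  ((s.1 + ε s.2.1 s.2.2, p.2, s.2.1), (p.1 - ε p.2 s.2.1 - ε s.2.1 s.2.2, s.2.2))

/-- The energy transfer `Λ` on a (secondary, primary) pair:
`Λ((k,c,c'), (k',c'')) = ((k' + ε c c' + ε c' c'', c), (k − ε c' c'', c', c''))`. -/
def LamSP {C : Type*} (ε : C → C → ℤ) (s : ℤ × C × C) (p : ℤ × C) :
    (ℤ × C) × (ℤ × C × C) :=
  ((p.1 + ε s.2.1 s.2.2 + ε s.2.2 p.2, s.2.1), (s.1 - ε s.2.2 p.2, s.2.2, p.2))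

/-- The energy transfer `Λ` is an involution: `Λ ∘ Λ` is the identity on
(primary, secondary) pairs and on (secondary, primary) pairs. -/
theorem statement8 {C : Type*} (ε : C → C → ℤ)
    (hε : ∀ c c', ε c c' = 0 ∨ ε c c' = 1) :
    (∀ (p : ℤ × C) (s : ℤ × C × C),
      LamSP ε (LamPS ε p s).1 (LamPS ε p s).2 = (p, s)) ∧
    (∀ (s : ℤ × C × C) (p : ℤ × C),
      LamPS ε (LamSP ε s p).1 (LamSP ε s p).2 = (s, p)) := by
  constructor <;> intro a b <;> simp [LamPS, LamSP] <;> ring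
end

section
/- With λ = ((l₁,c₁),…,(l_s,c_s)) a sequence of primary particles consecutively related by ≻_ε, and with I, J the subsets of {1,…,s} such that I, I+1, J form a set-partition of {1,…,s}, l_i − l_{i+1} = Δ(i,i+1) for all i ∈ I, and l_{j−1} − l_j > Δ(j−1,j) for all j ∈ J with j ≥ 2, define φ(j,i) = l_j − 2 l_{i+1} − Δ(j,i+1) − Δ(i+1−β(j,i), i+1) for (j,i) ∈ J × I. Then φ is non-increasing in its first argument on J and non-decreasing in its second argument on I: for all j < j' in J and i in I, φ(j,i) ≥ φ(j',i), and for all j in J and i < i' in I, φ(j,i) ≤ φ(j,i'). -/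
open Finset in
/-- The formal energy of transfer `Δ(k,k')` along the state sequence `c`:
`Δ(k,k') = Σ_{u=k}^{k'−1} ε(c_u,c_{u+1})` for `k ≤ k'` and `Δ(k,k') = −Δ(k',k)` else. -/
noncomputable def Del {C : Type*} (ε : C → C → ℤ) (c : ℤ → C) (k k' : ℤ) : ℤ :=
  (∑ u ∈ Finset.Ico k k', ε (c u) (c (u + 1))) -
    ∑ u ∈ Finset.Ico k' k, ε (c u) (c (u + 1))

/-- `β(k,k') = |[k,k') ∩ J|` for `k ≤ k'` and `β(k,k') = −β(k',k)` otherwise. -/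
noncomputable def Bet (J : Finset ℤ) (k k' : ℤ) : ℤ :=
  ((Finset.Ico k k' ∩ J).card : ℤ) - ((Finset.Ico k' k ∩ J).card : ℤ)

/-- The function `φ(j,i) = l_j − 2 l_{i+1} − Δ(j,i+1) − Δ(i+1−β(j,i), i+1)`. -/
noncomputable def Phi {C : Type*} (ε : C → C → ℤ) (c : ℤ → C) (l : ℤ → ℤ) (J : Finset ℤ)
    (j i : ℤ) : ℤ :=
  l j - 2 * l (i + 1) - Del ε c j (i + 1) - Del ε c (i + 1 - Bet J j i) (i + 1)

/-- Signed sum of `f` over `[a, b)` (negated if `b < a`). -/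
noncomputable def DSaux (f : ℤ → ℤ) (a b : ℤ) : ℤ :=
  (∑ u ∈ Finset.Ico a b, f u) - ∑ u ∈ Finset.Ico b a, f u

lemma DSaux_succ (f : ℤ → ℤ) (a b : ℤ) : DSaux f a (b + 1) = DSaux f a b + f b := by
  rcases le_or_gt a b with h | h
  · have h1 : Finset.Ico a (b + 1) = insert b (Finset.Ico a b) := by ext x; simp; omega
    have h2 : Finset.Ico (b + 1) a = (∅ : Finset ℤ) := by ext x; simp; omega
    have h3 : Finset.Ico b a = (∅ : Finset ℤ) := by ext x; simp; omega
    have hb : b ∉ Finset.Ico a b := by simp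
    simp only [DSaux, h1, h2, h3, Finset.sum_insert hb, Finset.sum_empty]
    ring
  · have h1 : Finset.Ico b a = insert b (Finset.Ico (b + 1) a) := by ext x; simp; omega
    have h2 : Finset.Ico a b = (∅ : Finset ℤ) := by ext x; simp; omega
    have h3 : Finset.Ico a (b + 1) = (∅ : Finset ℤ) := by ext x; simp; omega
    have hb : b ∉ Finset.Ico (b + 1) a := by simp
    simp only [DSaux, h1, h2, h3, Finset.sum_insert hb, Finset.sum_empty]
    ring

lemma DSaux_eq (f : ℤ → ℤ) (a b : ℤ) : DSaux f a b = DSaux f 0 b - DSaux f 0 a := by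
  induction b using Int.induction_on with
  | zero =>
      have h0 : DSaux f 0 0 = 0 := by simp [DSaux]
      have h1 : DSaux f a 0 = - DSaux f 0 a := by simp [DSaux]
      linarith
  | succ k ih =>
      have h1 := DSaux_succ f a (k : ℤ)
      have h2 := DSaux_succ f 0 (k : ℤ)
      linarith
  | pred k ih =>
      have h1 := DSaux_succ f a (-(k : ℤ) - 1)
      have h2 := DSaux_succ f 0 (-(k : ℤ) - 1)
      have e : (-(k : ℤ) - 1) + 1 = -(k : ℤ) := by ring
      rw [e] at h1 h2
      linarith

lemma Del_eq_DSaux {C : Type*} (ε : C → C → ℤ) (c : ℤ → C) (a b : ℤ) :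
    Del ε c a b = DSaux (fun u => ε (c u) (c (u + 1))) a b := rfl

lemma Bet_eq_DSaux (J : Finset ℤ) (a b : ℤ) :
    Bet J a b = DSaux (fun u => if u ∈ J then (1 : ℤ) else 0) a b := by
  have hcard : ∀ x y : ℤ, ((Finset.Ico x y ∩ J).card : ℤ)
      = ∑ u ∈ Finset.Ico x y, (if u ∈ J then (1 : ℤ) else 0) := by
    intro x y
    rw [← Finset.filter_mem_eq_inter, Finset.card_filter]
    push_cast
    rfl
  rw [Bet, DSaux, hcard, hcard]

lemma mono_of_step (F : ℤ → ℤ) (h : ∀ k, 0 ≤ F (k + 1) - F k) :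
    ∀ a b : ℤ, a ≤ b → F a ≤ F b := by
  intro a b hab
  refine Int.le_induction (motive := fun b _ => F a ≤ F b) (le_refl (F a)) ?_ b hab
  intro n hn ih
  have := h n; linarith

lemma lip_of_step (F : ℤ → ℤ) (h : ∀ k, F (k + 1) - F k ≤ 1) :
    ∀ a b : ℤ, a ≤ b → F b - F a ≤ b - a := by
  intro a b hab
  refine Int.le_induction (motive := fun b _ => F b - F a ≤ b - a) (by simp) ?_ b hab
  intro n hn ih
  have := h n; linarith

/-- Lemma 4.2: `φ` is non-increasing in its first argument on `J` and non-decreasing in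
its second argument on `I`. -/
theorem statement9 {C : Type*} (ε : C → C → ℤ)
    (hε : ∀ c c', ε c c' = 0 ∨ ε c c' = 1)
    (s : ℤ) (l : ℤ → ℤ) (c : ℤ → C) (I J : Finset ℤ)
    (hchain : ∀ k, 1 ≤ k → k < s → ε (c k) (c (k + 1)) ≤ l k - l (k + 1))
    (hd1 : Disjoint I (I.image (· + 1))) (hd2 : Disjoint I J)
    (hd3 : Disjoint (I.image (· + 1)) J)
    (hu : I ∪ I.image (· + 1) ∪ J = Finset.Icc 1 s)
    (hI : ∀ i ∈ I, l i - l (i + 1) = Del ε c i (i + 1))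
    (hJ : ∀ j ∈ J, 2 ≤ j → Del ε c (j - 1) j < l (j - 1) - l j) :
    (∀ j ∈ J, ∀ j' ∈ J, j < j' → ∀ i ∈ I, Phi ε c l J j' i ≤ Phi ε c l J j i) ∧
    (∀ j ∈ J, ∀ i ∈ I, ∀ i' ∈ I, i < i' → Phi ε c l J j i ≤ Phi ε c l J j i') := by
  classical
  set f : ℤ → ℤ := fun u => ε (c u) (c (u + 1)) with hf
  set g : ℤ → ℤ := fun u => if u ∈ J then (1 : ℤ) else 0 with hg
  set G : ℤ → ℤ := fun k => DSaux f 0 k with hG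
  set B : ℤ → ℤ := fun k => DSaux g 0 k with hB
  set H : ℤ → ℤ := fun k => l k + G k with hH
  -- basic step facts
  have hf01 : ∀ u, 0 ≤ f u ∧ f u ≤ 1 := by
    intro u; rcases hε (c u) (c (u + 1)) with h | h <;> simp [hf, h]
  have hg01 : ∀ u, 0 ≤ g u ∧ g u ≤ 1 := by
    intro u; by_cases h : u ∈ J <;> simp [hg, h]
  have hGstep : ∀ k, G (k + 1) - G k = f k := by
    intro k; simp only [hG]; rw [DSaux_succ]; ring
  have hBstep : ∀ k, B (k + 1) - B k = g k := by
    intro k; simp only [hB]; rw [DSaux_succ]; ring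
  have hGmono : ∀ a b : ℤ, a ≤ b → G a ≤ G b :=
    mono_of_step G (fun k => by rw [hGstep]; exact (hf01 k).1)
  have hGlip : ∀ a b : ℤ, a ≤ b → G b - G a ≤ b - a :=
    lip_of_step G (fun k => by rw [hGstep]; exact (hf01 k).2)
  have hBmono : ∀ a b : ℤ, a ≤ b → B a ≤ B b :=
    mono_of_step B (fun k => by rw [hBstep]; exact (hg01 k).1)
  have hBlip : ∀ a b : ℤ, a ≤ b → B b - B a ≤ b - a :=
    lip_of_step B (fun k => by rw [hBstep]; exact (hg01 k).2)
  have hDel : ∀ a b : ℤ, Del ε c a b = G b - G a := by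
    intro a b; rw [Del_eq_DSaux, DSaux_eq]
  have hBet : ∀ a b : ℤ, Bet J a b = B b - B a := by
    intro a b; rw [Bet_eq_DSaux, DSaux_eq]
  -- ranges
  have hJrange : ∀ j ∈ J, 1 ≤ j ∧ j ≤ s := by
    intro j hj
    have : j ∈ Finset.Icc 1 s := by
      rw [← hu]; exact Finset.mem_union_right _ hj
    simpa using Finset.mem_Icc.mp this
  have hIrange : ∀ i ∈ I, 1 ≤ i ∧ i + 1 ≤ s := by
    intro i hi
    have h1 : i ∈ Finset.Icc 1 s := by
      rw [← hu]
      exact Finset.mem_union_left _ (Finset.mem_union_left _ hi)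
    have h2 : i + 1 ∈ Finset.Icc 1 s := by
      rw [← hu]
      exact Finset.mem_union_left _
        (Finset.mem_union_right _ (Finset.mem_image_of_mem _ hi))
    have h1' := Finset.mem_Icc.mp h1
    have h2' := Finset.mem_Icc.mp h2
    omega
  -- the key descent step for H
  have hstep : ∀ k : ℤ, 1 ≤ k → k < s → H (k + 1) + B (k + 2) ≤ H k + B (k + 1) := by
    intro k hk1 hks
    have hB2 : B (k + 2) = B (k + 1) + g (k + 1) := by
      have := hBstep (k + 1); have e : k + 1 + 1 = k + 2 := by ring
      rw [e] at this; linarith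
    have hGk : G (k + 1) = G k + f k := by have := hGstep k; linarith
    by_cases hkJ : (k + 1) ∈ J
    · have hJk := hJ (k + 1) hkJ (by omega)
      have e : k + 1 - 1 = k := by ring
      rw [e] at hJk
      have hDelk : Del ε c k (k + 1) = f k := by
        rw [hDel]; have := hGstep k; linarith
      rw [hDelk] at hJk
      have hgk : g (k + 1) = 1 := by simp [hg, hkJ]
      simp only [hH]
      rw [hB2, hgk, hGk]
      linarith
    · have hc := hchain k hk1 hks
      have hgk : g (k + 1) = 0 := by simp [hg, hkJ]
      simp only [hH]
      rw [hB2, hgk, hGk]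
      have : f k ≤ l k - l (k + 1) := hc
      linarith
  have hdrop : ∀ a b : ℤ, 1 ≤ a → a ≤ b → b ≤ s → H b + B (b + 1) ≤ H a + B (a + 1) := by
    intro a b ha hab
    refine Int.le_induction
      (motive := fun b _ => b ≤ s → H b + B (b + 1) ≤ H a + B (a + 1)) ?_ ?_ b hab
    · intro _; exact le_refl _
    · intro n hn ih hns
      have h1 := ih (by omega)
      have h2 := hstep n (by omega) (by omega)
      have e : n + 1 + 1 = n + 2 := by ring
      rw [e]
      linarith
  -- rewrite of Phi
  have hPhi : ∀ j i : ℤ, Phi ε c l J j i = H j - 2 * H (i + 1) + G (i + 1 - B i + B j) := by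
    intro j i
    have e2 : Bet J j i = B i - B j := hBet j i
    have e1 : Del ε c j (i + 1) = G (i + 1) - G j := hDel j (i + 1)
    have e3 : Del ε c (i + 1 - Bet J j i) (i + 1)
        = G (i + 1) - G (i + 1 - Bet J j i) := hDel _ _
    have e4 : i + 1 - Bet J j i = i + 1 - B i + B j := by rw [e2]; ring
    unfold Phi
    rw [e3, e4, e1]
    simp only [hH]
    ring
  have hBsuccJ : ∀ j ∈ J, B (j + 1) = B j + 1 := by
    intro j hj
    have := hBstep j
    have hgj : g j = 1 := by simp [hg, hj]
    linarith
  constructor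
  · intro j hj j' hj' hjj' i hi
    obtain ⟨hj1, hjs⟩ := hJrange j hj
    obtain ⟨hj'1, hj's⟩ := hJrange j' hj'
    have hd := hdrop j j' hj1 (le_of_lt hjj') hj's
    rw [hBsuccJ j hj, hBsuccJ j' hj'] at hd
    -- hd : H j' + (B j' + 1) ≤ H j + (B j + 1)
    have hBjj : B j ≤ B j' := hBmono j j' (le_of_lt hjj')
    have hGl : G (i + 1 - B i + B j') - G (i + 1 - B i + B j)
        ≤ (i + 1 - B i + B j') - (i + 1 - B i + B j) :=
      hGlip _ _ (by linarith)
    rw [hPhi, hPhi]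
    linarith
  · intro j hj i hi i' hi' hii'
    obtain ⟨hi1, his⟩ := hIrange i hi
    obtain ⟨hi'1, hi's⟩ := hIrange i' hi'
    have hd := hdrop (i + 1) (i' + 1) (by omega) (by omega) hi's
    have hBm : B (i + 1 + 1) ≤ B (i' + 1 + 1) := hBmono _ _ (by omega)
    have hHle : H (i' + 1) ≤ H (i + 1) := by linarith
    have hBl : B i' - B i ≤ i' - i := hBlip i i' (le_of_lt hii')
    have hGm : G (i + 1 - B i + B j) ≤ G (i' + 1 - B i' + B j) :=
      hGmono _ _ (by linarith)
    rw [hPhi, hPhi]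
    linarith
end

section
/- With λ = ((l₁,c₁),…,(l_s,c_s)) a sequence of primary particles consecutively related by ≻_ε, and with I, J subsets of {1,…,s} such that I, I+1, J form a set-partition of {1,…,s}, l_i − l_{i+1} = Δ(i,i+1) for all i ∈ I, and l_{j−1} − l_j > Δ(j−1,j) for all j ∈ J with j ≥ 2, the inequality l_k − l_{k'} ≥ α(k,k') + Δ(k,k') holds for all k ≤ k' in {1,…,s}, where α(k,k') = |(k,k'] ∩ J|. -/
lemma Del_succ {C : Type*} (ε : C → C → ℤ) (c : ℤ → C) {k k' : ℤ} (h : k ≤ k') :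
    Del ε c k (k' + 1) = Del ε c k k' + ε (c k') (c (k' + 1)) := by
  unfold Del
  have hins : Finset.Ico k (k' + 1) = insert k' (Finset.Ico k k') := by
    ext x; simp only [Finset.mem_Ico, Finset.mem_insert]; omega
  rw [hins, Finset.sum_insert (by simp [Finset.mem_Ico]),
    Finset.Ico_eq_empty (show ¬ k' + 1 < k by omega),
    Finset.Ico_eq_empty (show ¬ k' < k by omega)]
  ring

/-- Equation (4.5): for a sequence consecutively related by `≻_ε` with its decomposition
`I, I+1, J` of `{1,…,s}`, one has `l_k − l_{k'} ≥ α(k,k') + Δ(k,k')` for all `k ≤ k'`,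
where `α(k,k') = |(k,k'] ∩ J|`. -/
theorem statement10 {C : Type*} (ε : C → C → ℤ)
    (hε : ∀ c c', ε c c' = 0 ∨ ε c c' = 1)
    (s : ℤ) (l : ℤ → ℤ) (c : ℤ → C) (I J : Finset ℤ)
    (hchain : ∀ k, 1 ≤ k → k < s → ε (c k) (c (k + 1)) ≤ l k - l (k + 1))
    (hd1 : Disjoint I (I.image (· + 1))) (hd2 : Disjoint I J)
    (hd3 : Disjoint (I.image (· + 1)) J)
    (hu : I ∪ I.image (· + 1) ∪ J = Finset.Icc 1 s)
    (hI : ∀ i ∈ I, l i - l (i + 1) = Del ε c i (i + 1))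
    (hJ : ∀ j ∈ J, 2 ≤ j → Del ε c (j - 1) j < l (j - 1) - l j) :
    ∀ k k', 1 ≤ k → k ≤ k' → k' ≤ s →
      ((Finset.Ioc k k' ∩ J).card : ℤ) + Del ε c k k' ≤ l k - l k' := by
  intro k k' hk hkk' hk's
  refine Int.le_induction (motive := fun n _ => n ≤ s →
      ((Finset.Ioc k n ∩ J).card : ℤ) + Del ε c k n ≤ l k - l n) ?_ ?_ k' hkk' hk's
  · intro _
    simp [Del]
  · intro n hn ih hns
    have ih' := ih (by omega)
    have hcard : Finset.Ioc k (n + 1) ∩ J =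
        if n + 1 ∈ J then insert (n + 1) (Finset.Ioc k n ∩ J)
        else Finset.Ioc k n ∩ J := by
      split_ifs with hmem
      · ext x
        simp only [Finset.mem_inter, Finset.mem_Ioc, Finset.mem_insert]
        constructor
        · rintro ⟨⟨h1, h2⟩, h3⟩
          rcases eq_or_lt_of_le h2 with h | h
          · exact Or.inl h
          · exact Or.inr ⟨⟨h1, by omega⟩, h3⟩
        · rintro (rfl | ⟨⟨h1, h2⟩, h3⟩)
          · exact ⟨⟨by omega, le_refl _⟩, hmem⟩
          · exact ⟨⟨h1, by omega⟩, h3⟩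
      · ext x
        simp only [Finset.mem_inter, Finset.mem_Ioc]
        constructor
        · rintro ⟨⟨h1, h2⟩, h3⟩
          refine ⟨⟨h1, ?_⟩, h3⟩
          rcases eq_or_lt_of_le h2 with h | h
          · exact absurd (h ▸ h3) hmem
          · omega
        · rintro ⟨⟨h1, h2⟩, h3⟩
          exact ⟨⟨h1, by omega⟩, h3⟩
    rw [Del_succ ε c hn, hcard]
    by_cases hmem : n + 1 ∈ J
    · rw [if_pos hmem]
      rw [Finset.card_insert_of_notMem (by simp [Finset.mem_Ioc])]
      have hstep := hJ (n + 1) hmem (by omega)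
      have hDel : Del ε c (n + 1 - 1) (n + 1) = ε (c n) (c (n + 1)) := by
        have : (n + 1 - 1 : ℤ) = n := by ring
        rw [this, Del_succ ε c (le_refl n)]
        simp [Del]
      rw [hDel, show (n + 1 - 1 : ℤ) = n by ring] at hstep
      push_cast
      omega
    · rw [if_neg hmem]
      have hstep := hchain n (by omega) (by omega)
      omega
end

section
/- Let ν ∈ E_ε be written as a sequence of primary particles ((l₁,c₁),…,(l_s,c_s)), where I ⊆ {1,…,s} indexes the upper halves of the secondary particles of ν (so l_i = l_{i+1} + ε(c_i,c_{i+1}) for i ∈ I), I+1 indexes the lower halves, and J indexes the particles of ν that are primary, I, I+1, J forming a set-partition of {1,…,s}. Setting l'_k = l_k for k ∈ J and l'_k = 2 l_k for k ∈ I ∪ (I+1), the inequality l'_k − l'_{k'} ≥ η(k,k') + Δ(k,k') holds for all k ≤ k' in {1,…,s}, where η(k,k') = |(k,k'] ∩ J|. -/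
/-- Doubled potentials: `l'_k = l_k` for `k ∈ J` (primary particles) and `l'_k = 2 l_k`
for `k ∈ I ∪ (I+1)` (halves of secondary particles). -/
def lpot (l : ℤ → ℤ) (J : Finset ℤ) (k : ℤ) : ℤ := if k ∈ J then l k else 2 * l k

/-- Lemma 4.9, equation (4.9): for `ν ∈ E_ε` written as a sequence of primary particles,
`l'_k − l'_{k'} ≥ η(k,k') + Δ(k,k')` for all `k ≤ k'`, where `η(k,k') = |(k,k'] ∩ J|`. -/
theorem statement12 {C : Type*} (ε : C → C → ℤ)
    (hε : ∀ c c', ε c c' = 0 ∨ ε c c' = 1)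
    (s : ℤ) (l : ℤ → ℤ) (c : ℤ → C) (I J : Finset ℤ)
    (hd1 : Disjoint I (I.image (· + 1))) (hd2 : Disjoint I J)
    (hd3 : Disjoint (I.image (· + 1)) J)
    (hu : I ∪ I.image (· + 1) ∪ J = Finset.Icc 1 s)
    (hupper : ∀ i ∈ I, l i = l (i + 1) + ε (c i) (c (i + 1)))
    (hJJ : ∀ k, k ∈ J → k + 1 ∈ J →
      ε (c k) (c (k + 1)) < l k - l (k + 1))
    (hJI : ∀ k, k ∈ J → k + 1 ∈ I →
      ε (c k) (c (k + 1)) + ε (c (k + 1)) (c (k + 2)) ≤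
        l k - (2 * l (k + 2) + ε (c (k + 1)) (c (k + 2))))
    (hIJ : ∀ i ∈ I, i + 2 ∈ J →
      ε (c i) (c (i + 1)) + ε (c (i + 1)) (c (i + 2)) <
        (2 * l (i + 1) + ε (c i) (c (i + 1))) - l (i + 2))
    (hII : ∀ i ∈ I, i + 2 ∈ I →
      ε (c (i + 1)) (c (i + 2)) + ε (c (i + 2)) (c (i + 3)) ≤ l (i + 1) - l (i + 3))
    :
    ∀ k k', 1 ≤ k → k ≤ k' → k' ≤ s →
      ((Finset.Ioc k k' ∩ J).card : ℤ) + Del ε c k k' ≤ lpot l J k - lpot l J k' := by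
  -- membership trichotomy
  have hmem : ∀ v : ℤ, 1 ≤ v → v ≤ s → v ∈ I ∨ (v - 1) ∈ I ∨ v ∈ J := by
    intro v hv1 hv2
    have : v ∈ I ∪ I.image (· + 1) ∪ J := by
      rw [hu]; simp [Finset.mem_Icc]; omega
    simp only [Finset.mem_union, Finset.mem_image] at this
    rcases this with ((h | ⟨i, hi, hiv⟩) | h)
    · exact Or.inl h
    · right; left; have : i = v - 1 := by omega
      rwa [← this]
    · exact Or.inr (Or.inr h)
  have hIJ' : ∀ v, v ∈ I → v ∉ J := fun v hv => Finset.disjoint_left.mp hd2 hv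
  have hI1J : ∀ v, v ∈ I → v + 1 ∉ J := by
    intro v hv
    exact Finset.disjoint_left.mp hd3 (Finset.mem_image.mpr ⟨v, hv, rfl⟩)
  have hII1 : ∀ v, v ∈ I → v + 1 ∉ I := by
    intro v hv
    exact fun h => Finset.disjoint_left.mp hd1 h (Finset.mem_image.mpr ⟨v, hv, rfl⟩)
  -- one-step inequality
  have step : ∀ u : ℤ, 1 ≤ u → u + 1 ≤ s →
      (if u + 1 ∈ J then (1 : ℤ) else 0) + ε (c u) (c (u + 1)) ≤
        lpot l J u - lpot l J (u + 1) := by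
    intro u hu1 hu2
    have hεnn : ∀ a b, (0 : ℤ) ≤ ε a b := by
      intro a b; rcases hε a b with h | h <;> omega
    rcases hmem u hu1 (by omega) with huI | huI1 | huJ
    · -- u ∈ I : u+1 is lower half
      have h1 : u + 1 ∉ J := hI1J u huI
      have h0 : u ∉ J := hIJ' u huI
      have := hupper u huI
      have := hεnn (c u) (c (u + 1))
      simp only [lpot, if_neg h0, if_neg h1, if_neg h1]
      linarith
    · -- u - 1 ∈ I : u is a lower half
      have h0 : u ∉ J := by
        have := hI1J (u - 1) huI1
        simpa using (by rwa [show u - 1 + 1 = u by ring] at this)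
      rcases hmem (u + 1) (by omega) hu2 with hvI | hvI1 | hvJ
      · -- u+1 ∈ I : case II (hII with i = u-1)
        have h1 : u + 1 ∉ J := hIJ' _ hvI
        have key := hII (u - 1) huI1 (by rwa [show u - 1 + 2 = u + 1 by ring])
        rw [show u - 1 + 1 = u by ring, show u - 1 + 2 = u + 1 by ring,
          show u - 1 + 3 = u + 2 by ring] at key
        have := hupper (u + 1) hvI
        rw [show u + 1 + 1 = u + 2 by ring] at this
        have := hεnn (c u) (c (u + 1))
        simp only [lpot, if_neg h0, if_neg h1]
        linarith
      · -- u+1-1 = u ∈ I : contradiction with u-1 ∈ I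
        exfalso
        have : u ∈ I := by simpa using hvI1
        have := hII1 (u - 1) huI1
        rw [show u - 1 + 1 = u by ring] at this
        exact this ‹u ∈ I›
      · -- u+1 ∈ J : case IJ
        have key := hIJ (u - 1) huI1 (by rwa [show u - 1 + 2 = u + 1 by ring])
        rw [show u - 1 + 1 = u by ring, show u - 1 + 2 = u + 1 by ring] at key
        simp only [lpot, if_neg h0, if_pos hvJ]
        linarith
    · -- u ∈ J
      rcases hmem (u + 1) (by omega) hu2 with hvI | hvI1 | hvJ
      · -- u+1 ∈ I : case JI
        have h1 : u + 1 ∉ J := hIJ' _ hvI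
        have key := hJI u huJ hvI
        have := hupper (u + 1) hvI
        rw [show u + 1 + 1 = u + 2 by ring] at this
        simp only [lpot, if_pos huJ, if_neg h1]
        linarith
      · -- u ∈ I : contradiction with u ∈ J
        exfalso
        have : u ∈ I := by simpa using hvI1
        exact hIJ' u this huJ
      · -- u+1 ∈ J : case JJ
        have key := hJJ u huJ hvJ
        simp only [lpot, if_pos huJ, if_pos hvJ]
        linarith
  intro k k' hk hkk' hk's
  have main : ∀ n : ℤ, k ≤ n → n ≤ s →
      ((Finset.Ioc k n ∩ J).card : ℤ) + Del ε c k n ≤ lpot l J k - lpot l J n := by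
    refine Int.le_induction ?_ ?_
    · intro _
      simp [Del]
    · intro n hn ih hns
      have ihn := ih (by omega)
      have hstep := step n (by omega) hns
      have hcard : ((Finset.Ioc k (n + 1) ∩ J).card : ℤ)
          = ((Finset.Ioc k n ∩ J).card : ℤ) + (if n + 1 ∈ J then 1 else 0) := by
        have hIoc : Finset.Ioc k (n + 1) = insert (n + 1) (Finset.Ioc k n) := by
          ext x; simp [Finset.mem_Ioc]; omega
        rw [hIoc]
        by_cases hJ : n + 1 ∈ J
        · rw [Finset.insert_inter_of_mem hJ,
            Finset.card_insert_of_notMem (by simp [Finset.mem_Ioc])]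
          simp [hJ]
        · rw [Finset.insert_inter_of_notMem hJ]; simp [hJ]
      have hDel : Del ε c k (n + 1) = Del ε c k n + ε (c n) (c (n + 1)) := by
        have hIco : Finset.Ico k (n + 1) = insert n (Finset.Ico k n) := by
          ext x; simp [Finset.mem_Ico]; omega
        have e1 : Finset.Ico (n + 1) k = ∅ := Finset.Ico_eq_empty (by omega)
        have e2 : Finset.Ico n k = ∅ := Finset.Ico_eq_empty (by omega)
        rw [Del, Del, hIco, e1, e2,
          Finset.sum_insert (by simp [Finset.mem_Ico])]
        simp only [Finset.sum_empty]
        ring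
      rw [hcard, hDel]
      linarith
  exact main k' hkk' hk's
end

section
/- Let ν ∈ E_ε be written as a sequence of primary particles ((l₁,c₁),…,(l_s,c_s)), where I ⊆ {1,…,s} indexes the upper halves of the secondary particles of ν (so l_i = l_{i+1} + ε(c_i,c_{i+1}) for i ∈ I), I+1 indexes the lower halves, and J indexes the particles of ν that are primary, I, I+1, J forming a set-partition of {1,…,s}. Then for all i ≤ i' with i, i' ∈ I ∪ (I+1), the inequality l_i − l_{i'} ≥ Δ(i,i') holds. -/
open Finset

lemma splitIco (f : ℤ → ℤ) {a b c : ℤ} (h1 : a ≤ b) (h2 : b ≤ c) :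
    ∑ u ∈ Ico a c, f u = (∑ u ∈ Ico a b, f u) + ∑ u ∈ Ico b c, f u := by
  rw [← Finset.Ico_union_Ico_eq_Ico h1 h2,
    Finset.sum_union (Finset.Ico_disjoint_Ico_consecutive a b c)]

lemma singIco (f : ℤ → ℤ) (a : ℤ) : ∑ u ∈ Ico a (a+1), f u = f a := by
  rw [(by ext x; simp; omega : Finset.Ico a (a+1) = {a}), Finset.sum_singleton]

lemma tel (f : ℤ → ℤ) {a b : ℤ} (h : a ≤ b) :
    ∑ u ∈ Finset.Ico a b, (f u - f (u+1)) = f a - f b := by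
  have key : ∀ (n : ℕ) (a b : ℤ), a ≤ b → b - a ≤ n →
      ∑ u ∈ Finset.Ico a b, (f u - f (u+1)) = f a - f b := by
    intro n
    induction n with
    | zero => intro a b h1 h2
              have : a = b := by omega
              subst this; simp
    | succ n ih =>
      intro a b h1 h2
      rcases eq_or_lt_of_le h1 with h3 | h3
      · subst h3; simp
      · rw [splitIco _ (by omega : a ≤ b - 1) (by omega : b - 1 ≤ b)]
        have := singIco (fun u => f u - f (u+1)) (b-1)
        rw [(by ring : b - 1 + 1 = b)] at this
        rw [this, ih a (b-1) (by omega) (by omega)]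
        simp [(by ring : b - 1 + 1 = b)]
  exact key (b - a).toNat a b h (by omega)

lemma cardIco (a b : ℤ) (h : a ≤ b) : ((Finset.Ico a b).card : ℤ) = b - a := by
  rw [Int.card_Ico]; omega

/-- The gap lemma: between the lower half of a secondary particle at `(j, j+1)` and the upper
half of the next secondary particle at `(q, q+1)`, with only primary particles in between. -/
lemma gapA {C : Type*} (ε : C → C → ℤ)
    (hε : ∀ c c', ε c c' = 0 ∨ ε c c' = 1)
    (l : ℤ → ℤ) (c : ℤ → C) (I J : Finset ℤ)
    (hupper : ∀ i ∈ I, l i = l (i + 1) + ε (c i) (c (i + 1)))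
    (hJJ : ∀ k, k ∈ J → k + 1 ∈ J →
      ε (c k) (c (k + 1)) < l k - l (k + 1))
    (hJI : ∀ k, k ∈ J → k + 1 ∈ I →
      ε (c k) (c (k + 1)) + ε (c (k + 1)) (c (k + 2)) ≤
        l k - (2 * l (k + 2) + ε (c (k + 1)) (c (k + 2))))
    (hIJ : ∀ i ∈ I, i + 2 ∈ J →
      ε (c i) (c (i + 1)) + ε (c (i + 1)) (c (i + 2)) <
        (2 * l (i + 1) + ε (c i) (c (i + 1))) - l (i + 2))
    (hII : ∀ i ∈ I, i + 2 ∈ I →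
      ε (c (i + 1)) (c (i + 2)) + ε (c (i + 2)) (c (i + 3)) ≤ l (i + 1) - l (i + 3))
    (j q : ℤ) (hj : j ∈ I) (hq : q ∈ I) (hlt : j + 1 < q)
    (hJmid : ∀ u, j + 1 < u → u < q → u ∈ J) :
    ∑ u ∈ Ico (j+1) q, ε (c u) (c (u+1)) ≤ l (j+1) - l q := by
  rcases (by omega : j + 2 = q ∨ j + 2 < q) with he | hq3
  · -- q = j + 2 : use hII
    subst he
    have h1 := hII j hj hq
    have h2 := hupper (j+2) hq
    rw [show (j:ℤ)+2+1 = j+3 by ring] at h2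
    rw [show (j:ℤ)+2 = (j+1)+1 by ring, singIco,
      show (j:ℤ)+1+1 = j+2 by ring]
    linarith
  · -- j + 3 ≤ q
    have hj2J : j + 2 ∈ J := hJmid (j+2) (by omega) (by omega)
    have hq1J : q - 1 ∈ J := hJmid (q-1) (by omega) (by omega)
    have h1 := hIJ j hj hj2J
    have h1' := Int.add_one_le_iff.mpr h1
    have h3 := hJI (q-1) hq1J (by rw [show (q:ℤ)-1+1 = q by ring]; exact hq)
    rw [show (q:ℤ)-1+1 = q by ring, show (q:ℤ)-1+2 = q+1 by ring] at h3
    have h4 := hupper q hq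
    -- the middle primary particles
    have hmid : ∀ u ∈ Ico (j+2) (q-1),
        ε (c u) (c (u+1)) + 1 ≤ l u - l (u+1) := by
      intro u hu
      rw [Finset.mem_Ico] at hu
      exact Int.add_one_le_iff.mpr
        (hJJ u (hJmid u (by omega) (by omega)) (hJmid (u+1) (by omega) (by omega)))
    have hsum1 : ∑ u ∈ Ico (j+2) (q-1), (ε (c u) (c (u+1)) + 1) ≤ l (j+2) - l (q-1) := by
      have h := Finset.sum_le_sum hmid
      rwa [tel l (by omega : (j:ℤ)+2 ≤ q-1)] at h
    have hc : ∑ u ∈ Ico (j+2) (q-1), (ε (c u) (c (u+1)) + 1)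
        = (∑ u ∈ Ico (j+2) (q-1), ε (c u) (c (u+1))) + (q - j - 3) := by
      rw [Finset.sum_add_distrib, Finset.sum_const, nsmul_eq_mul, mul_one,
        cardIco _ _ (by omega)]
      ring
    have s1 : ∑ u ∈ Ico (j+1) (j+2), ε (c u) (c (u+1)) = ε (c (j+1)) (c (j+2)) := by
      have := singIco (fun u => ε (c u) (c (u+1))) (j+1)
      rw [show (j:ℤ)+1+1 = j+2 by ring] at this
      exact this
    have s2 : ∑ u ∈ Ico (q-1) q, ε (c u) (c (u+1)) = ε (c (q-1)) (c q) := by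
      have := singIco (fun u => ε (c u) (c (u+1))) (q-1)
      rw [show (q:ℤ)-1+1 = q by ring] at this
      exact this
    have e1 : ∑ u ∈ Ico (j+1) q, ε (c u) (c (u+1))
        = ε (c (j+1)) (c (j+2)) + (∑ u ∈ Ico (j+2) (q-1), ε (c u) (c (u+1)))
          + ε (c (q-1)) (c q) := by
      rw [splitIco _ (by omega : (j:ℤ)+1 ≤ j+2) (by omega : (j:ℤ)+2 ≤ q),
        splitIco _ (by omega : (j:ℤ)+2 ≤ q-1) (by omega : (q:ℤ)-1 ≤ q), s1, s2]
      ring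
    have hbound : ∑ u ∈ Ico (j+1) q, ε (c u) (c (u+1)) ≤ q - (j+1) := by
      have hle : ∀ u ∈ Ico (j+1) q, ε (c u) (c (u+1)) ≤ 1 := by
        intro u _
        rcases hε (c u) (c (u+1)) with h | h <;> omega
      calc ∑ u ∈ Ico (j+1) q, ε (c u) (c (u+1)) ≤ ∑ _u ∈ Ico (j+1) q, (1:ℤ) :=
            Finset.sum_le_sum hle
        _ = q - (j+1) := by
            rw [Finset.sum_const, nsmul_eq_mul, mul_one, cardIco _ _ (by omega)]
    obtain ⟨D, hD⟩ : ∃ D, D = ∑ u ∈ Ico (j+1) q, ε (c u) (c (u+1)) := ⟨_, rfl⟩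
    obtain ⟨X, hX⟩ : ∃ X, X = l (j+1) - l q := ⟨_, rfl⟩
    rw [← hD, ← hX]
    have h2x : 2*D ≤ 2*X + 1 := by
      rw [hD, hX]
      linarith [h1', h3, h4, hsum1, hc, e1, hbound]
    have hDb : D ≤ X + 1 := by
      rw [hD, hX]
      linarith [h1', h3, h4, hsum1, hc, e1]
    omega

open Finset in
/-- Lemma 4.9, equation (4.10): for `ν ∈ E_ε` written as a sequence of primary particles,
`l_i − l_{i'} ≥ Δ(i,i')` for all `i ≤ i'` in `I ∪ (I+1)`. -/
theorem statement13 {C : Type*} (ε : C → C → ℤ)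
    (hε : ∀ c c', ε c c' = 0 ∨ ε c c' = 1)
    (s : ℤ) (l : ℤ → ℤ) (c : ℤ → C) (I J : Finset ℤ)
    (hd1 : Disjoint I (I.image (· + 1))) (hd2 : Disjoint I J)
    (hd3 : Disjoint (I.image (· + 1)) J)
    (hu : I ∪ I.image (· + 1) ∪ J = Finset.Icc 1 s)
    (hupper : ∀ i ∈ I, l i = l (i + 1) + ε (c i) (c (i + 1)))
    (hJJ : ∀ k, k ∈ J → k + 1 ∈ J →
      ε (c k) (c (k + 1)) < l k - l (k + 1))
    (hJI : ∀ k, k ∈ J → k + 1 ∈ I →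
      ε (c k) (c (k + 1)) + ε (c (k + 1)) (c (k + 2)) ≤
        l k - (2 * l (k + 2) + ε (c (k + 1)) (c (k + 2))))
    (hIJ : ∀ i ∈ I, i + 2 ∈ J →
      ε (c i) (c (i + 1)) + ε (c (i + 1)) (c (i + 2)) <
        (2 * l (i + 1) + ε (c i) (c (i + 1))) - l (i + 2))
    (hII : ∀ i ∈ I, i + 2 ∈ I →
      ε (c (i + 1)) (c (i + 2)) + ε (c (i + 2)) (c (i + 3)) ≤ l (i + 1) - l (i + 3))
    :
    ∀ i ∈ I ∪ I.image (· + 1), ∀ i' ∈ I ∪ I.image (· + 1), i ≤ i' →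
      Del ε c i i' ≤ l i - l i' := by
  have key : ∀ (n : ℕ) (i i' : ℤ), i ∈ I ∪ I.image (· + 1) → i' ∈ I ∪ I.image (· + 1) →
      i ≤ i' → i' - i ≤ n → ∑ u ∈ Ico i i', ε (c u) (c (u+1)) ≤ l i - l i' := by
    intro n
    induction n with
    | zero =>
      intro i i' _ _ hle hbd
      have : i = i' := by omega
      subst this; simp
    | succ n ih =>
      intro i i' hi hi' hle hbd
      rcases eq_or_lt_of_le hle with rfl | hlt
      · simp
      rcases Finset.mem_union.mp hi with hiI | hiIm
      · -- i is the upper half of a secondary particle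
        have hstep := hupper i hiI
        have hi1 : i + 1 ∈ I ∪ I.image (· + 1) :=
          Finset.mem_union_right _ (Finset.mem_image.mpr ⟨i, hiI, rfl⟩)
        have h1 : i + 1 ≤ i' := by omega
        have hrec := ih (i+1) i' hi1 hi' h1 (by omega)
        rw [splitIco _ (by omega : i ≤ i+1) h1, singIco]
        linarith
      · -- i is a lower half
        obtain ⟨v, hvI, hvi⟩ := Finset.mem_image.mp hiIm
        rcases Finset.mem_union.mp hi' with hi'I | hi'Im
        · -- i' ∈ I : take q the least element of I in (i, i']
          have hne : (I.filter (fun x => i < x ∧ x ≤ i')).Nonempty :=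
            ⟨i', by simp [Finset.mem_filter, hi'I, hlt]⟩
          set q := (I.filter (fun x => i < x ∧ x ≤ i')).min' hne with hqdef
          have hqT := Finset.min'_mem _ hne
          rw [Finset.mem_filter] at hqT
          obtain ⟨hqI, hiq, hqi'⟩ := hqT
          have hmin : ∀ x ∈ I, i < x → x ≤ i' → q ≤ x := fun x hx h1 h2 =>
            Finset.min'_le _ x (by simp [Finset.mem_filter, hx, h1, h2])
          have hmid : ∀ u, i < u → u < q → u ∈ J := by
            intro u h1 h2
            have hiicc : i ∈ Finset.Icc 1 s := by
              rw [← hu]; exact Finset.mem_union_left _ hi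
            have hqicc : q ∈ Finset.Icc 1 s := by
              rw [← hu]; exact Finset.mem_union_left _ (Finset.mem_union_left _ hqI)
            rw [Finset.mem_Icc] at hiicc hqicc
            have huicc : u ∈ Finset.Icc 1 s := by rw [Finset.mem_Icc]; omega
            rw [← hu] at huicc
            rcases Finset.mem_union.mp huicc with h3 | h3
            · exfalso
              rcases Finset.mem_union.mp h3 with h4 | h4
              · have := hmin u h4 h1 (by omega); omega
              · obtain ⟨w, hwI, hwu⟩ := Finset.mem_image.mp h4
                have hwne : w ≠ i := by
                  intro e
                  exact Finset.disjoint_left.mp hd1 (e ▸ hwI) hiIm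
                have := hmin w hwI (by omega) (by omega)
                omega
            · exact h3
          have hvgap := gapA ε hε l c I J hupper hJJ hJI hIJ hII v q hvI hqI
            (by omega) (by intro u h1 h2; exact hmid u (by omega) h2)
          rw [hvi] at hvgap
          have hrest := ih q i' (Finset.mem_union_left _ hqI) hi' hqi' (by omega)
          rw [splitIco _ (le_of_lt hiq) hqi']
          linarith
        · -- i' is a lower half : step back to w = i' - 1 ∈ I
          obtain ⟨w, hwI, hwi'⟩ := Finset.mem_image.mp hi'Im
          have hne : i ≠ w := by
            intro e
            exact Finset.disjoint_left.mp hd1 (e ▸ hwI) hiIm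
          have hiw : i ≤ w := by omega
          have h1 := ih i w hi (Finset.mem_union_left _ hwI) hiw (by omega)
          have hstep := hupper w hwI
          rw [← hwi', splitIco _ hiw (by omega : w ≤ w+1), singIco]
          linarith
  intro i hi i' hi' hle
  unfold Del
  rw [Finset.Ico_eq_empty (by omega : ¬ i' < i)]
  simpa using key (i' - i).toNat i i' hi hi' hle (by omega)
end

section
/- Let λ = ((l₁,c₁),…,(l_s,c_s)) be a sequence of primary particles consecutively related by ≻_ε, and let I, J be the unique subsets of {1,…,s} such that I, I+1, J form a set-partition of {1,…,s}, l_i − l_{i+1} = Δ(i,i+1) for all i ∈ I, and l_{j−1} − l_j > Δ(j−1,j) for all j ∈ J with j ≥ 2. Let σ be a permutation of {1,…,s} that is increasing on J, increasing on I, and satisfies σ(i+1) = σ(i)+1 for all i ∈ I, and suppose that the rearranged sequence — whose particle at position m is the primary particle (l_{σ^{-1}(m)} + Δ(m, σ^{-1}(m)), c_m) if σ^{-1}(m) ∈ J, and in which, for each i ∈ I, the particles at positions σ(i) and σ(i)+1 are merged into the secondary particle whose upper and lower halves they are — has all consecutive particles related by ≫_ε. Then for all (j,i) ∈ J × I: σ(j)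 < σ(i) if and only if φ(j,i) ≥ 0, where φ(j,i) = l_j − 2 l_{i+1} − Δ(j,i+1) − Δ(i+1−β(j,i), i+1). -/
/-- The potential of the rearranged sequence at position `m`:
the particle originally at position `σ⁻¹(m)` gains the formal energy of transfer
`Δ(m, σ⁻¹(m))` (Lemma 4.4). -/
noncomputable def Lpp {C : Type*} (ε : C → C → ℤ) (c : ℤ → C) (l : ℤ → ℤ) (σ : Equiv.Perm ℤ)
    (m : ℤ) : ℤ :=
  l (σ.symm m) + Del ε c m (σ.symm m)

section DelLemmas
variable {C : Type*} (ε : C → C → ℤ) (c : ℤ → C)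

lemma del_neg (a b : ℤ) : Del ε c a b = - Del ε c b a := by
  unfold Del; ring

lemma del_key {a b d : ℤ} (h1 : a ≤ b) (h2 : b ≤ d) :
    Del ε c a b + Del ε c b d = Del ε c a d := by
  unfold Del
  have e1 : Finset.Ico b a = ∅ := Finset.Ico_eq_empty (by omega)
  have e2 : Finset.Ico d b = ∅ := Finset.Ico_eq_empty (by omega)
  have e3 : Finset.Ico d a = ∅ := Finset.Ico_eq_empty (by omega)
  have hsum : (∑ u ∈ Finset.Ico a b, ε (c u) (c (u + 1))) +
      ∑ u ∈ Finset.Ico b d, ε (c u) (c (u + 1)) = ∑ u ∈ Finset.Ico a d, ε (c u) (c (u + 1)) := by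
    rw [← Finset.sum_union (Finset.Ico_disjoint_Ico_consecutive a b d),
      Finset.Ico_union_Ico_eq_Ico h1 h2]
  rw [e1, e2, e3]
  simp only [Finset.sum_empty, sub_zero]
  linarith [hsum]

lemma del_add (a b d : ℤ) : Del ε c a b + Del ε c b d = Del ε c a d := by
  rcases le_total a b with h1 | h1 <;> rcases le_total b d with h2 | h2 <;>
    rcases le_total a d with h3 | h3
  · exact del_key ε c h1 h2
  · exact del_key ε c h1 h2
  · linarith [del_key ε c h3 h2, del_neg ε c d b]
  · linarith [del_key ε c h3 h1, del_neg ε c a d, del_neg ε c b d]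
  · linarith [del_key ε c h1 h3, del_neg ε c a b]
  · linarith [del_key ε c h2 h3, del_neg ε c a b, del_neg ε c a d]
  · linarith [del_key ε c h2 h1, del_neg ε c a b, del_neg ε c b d, del_neg ε c a d]
  · linarith [del_key ε c h2 h1, del_neg ε c a b, del_neg ε c b d, del_neg ε c a d]

lemma del_self (a : ℤ) : Del ε c a a = 0 := by unfold Del; ring

lemma del_single (a : ℤ) : Del ε c a (a + 1) = ε (c a) (c (a + 1)) := by
  unfold Del
  have e1 : Finset.Ico (a+1) a = ∅ := Finset.Ico_eq_empty (by omega)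
  have e2 : Finset.Ico a (a+1) = {a} := by ext x; simp [Finset.mem_Ico]; omega
  rw [e1, e2]; simp

lemma del_nonneg (hε0 : ∀ x y, 0 ≤ ε x y) {a b : ℤ} (h : a ≤ b) : 0 ≤ Del ε c a b := by
  unfold Del
  have e1 : Finset.Ico b a = ∅ := Finset.Ico_eq_empty (by omega)
  rw [e1]
  simp only [Finset.sum_empty, sub_zero]
  exact Finset.sum_nonneg fun x _ => hε0 _ _

lemma del_le_sub (hε1 : ∀ x y, ε x y ≤ 1) {a b : ℤ} (h : a ≤ b) : Del ε c a b ≤ b - a := by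
  unfold Del
  have e1 : Finset.Ico b a = ∅ := Finset.Ico_eq_empty (by omega)
  rw [e1]
  simp only [Finset.sum_empty, sub_zero]
  calc (∑ u ∈ Finset.Ico a b, ε (c u) (c (u + 1))) ≤ ∑ _u ∈ Finset.Ico a b, (1:ℤ) :=
        Finset.sum_le_sum fun x _ => hε1 _ _
    _ = (Finset.Ico a b).card := by simp
    _ = b - a := by rw [Int.card_Ico]; omega

end DelLemmas

lemma bet_eq_del (J : Finset ℤ) (a b : ℤ) :
    Bet J a b = Del (fun x _ => if x ∈ J then (1:ℤ) else 0) (fun x => x) a b := by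
  unfold Bet Del
  congr 1 <;>
  · rw [← Finset.filter_mem_eq_inter, Finset.card_filter]
    push_cast
    rfl

lemma bet_neg (J : Finset ℤ) (a b : ℤ) : Bet J a b = - Bet J b a := by unfold Bet; ring

lemma bet_add (J : Finset ℤ) (a b d : ℤ) : Bet J a b + Bet J b d = Bet J a d := by
  rw [bet_eq_del, bet_eq_del, bet_eq_del]; exact del_add _ _ a b d

lemma bet_self (J : Finset ℤ) (a : ℤ) : Bet J a a = 0 := by
  rw [bet_eq_del]; exact del_self _ _ a

lemma bet_single (J : Finset ℤ) (a : ℤ) : Bet J a (a+1) = if a ∈ J then 1 else 0 := by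
  rw [bet_eq_del]; exact del_single _ _ a

lemma bet_nonneg (J : Finset ℤ) {a b : ℤ} (h : a ≤ b) : 0 ≤ Bet J a b := by
  rw [bet_eq_del]
  exact del_nonneg _ _ (fun x y => by by_cases hx : x ∈ J <;> simp [hx]) h

lemma bet_filter_of_le (J : Finset ℤ) {a b : ℤ} (h : a ≤ b) :
    Bet J a b = ((J.filter (· < b)).card : ℤ) - ((J.filter (· < a)).card : ℤ) := by
  have e : Finset.Ico b a = ∅ := Finset.Ico_eq_empty (by omega)
  have f1 : (J.filter (· < b)).filter (· < a) = J.filter (· < a) := by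
    ext x
    simp only [Finset.mem_filter]
    constructor
    · rintro ⟨⟨h1, _⟩, h3⟩; exact ⟨h1, h3⟩
    · rintro ⟨h1, h3⟩; exact ⟨⟨h1, by omega⟩, h3⟩
  have f2 : (J.filter (· < b)).filter (fun x => ¬ x < a) = Finset.Ico a b ∩ J := by
    ext x
    simp only [Finset.mem_filter, Finset.mem_inter, Finset.mem_Ico]
    constructor
    · rintro ⟨⟨h1, h2⟩, h3⟩; exact ⟨⟨by omega, h2⟩, h1⟩
    · rintro ⟨⟨h1, h2⟩, h3⟩; exact ⟨⟨h3, h2⟩, by omega⟩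
  have hc := Finset.card_filter_add_card_filter_not
    (s := J.filter (· < b)) (p := (· < a))
  rw [f1, f2] at hc
  unfold Bet
  rw [e, Finset.empty_inter]
  simp only [Finset.card_empty, Nat.cast_zero, sub_zero]
  omega

lemma bet_filter (J : Finset ℤ) (a b : ℤ) :
    Bet J a b = ((J.filter (· < b)).card : ℤ) - ((J.filter (· < a)).card : ℤ) := by
  rcases le_total a b with h | h
  · exact bet_filter_of_le J h
  · rw [bet_neg, bet_filter_of_le J h]; ring

section Tel
variable {C : Type*} (ε : C → C → ℤ) (c : ℤ → C) (l : ℤ → ℤ) (s : ℤ) (J : Finset ℤ)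

/-- telescoped lower bound on `l j - l b` along the original sequence -/
lemma ltel (hchain : ∀ k, 1 ≤ k → k < s → ε (c k) (c (k + 1)) ≤ l k - l (k + 1))
    (hJ : ∀ j ∈ J, 2 ≤ j → Del ε c (j - 1) j < l (j - 1) - l j)
    {j : ℤ} (hj1 : 1 ≤ j) :
    ∀ b, j ≤ b → b ≤ s → Del ε c j b + Bet J (j+1) (b+1) ≤ l j - l b := by
  intro b
  refine Int.le_induction
    (motive := fun b _ => b ≤ s → Del ε c j b + Bet J (j+1) (b+1) ≤ l j - l b) ?_ ?_ b
  · intro _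
    rw [del_self, bet_self]
    omega
  · intro b hjb ih hbs
    have hih := ih (by omega)
    have hdel : Del ε c j (b+1) = Del ε c j b + ε (c b) (c (b+1)) := by
      rw [← del_add ε c j b (b+1), del_single]
    have hbet : Bet J (j+1) (b+1+1) = Bet J (j+1) (b+1) + (if b+1 ∈ J then 1 else 0) := by
      rw [← bet_add J (j+1) (b+1) (b+1+1), bet_single]
    by_cases hmem : b + 1 ∈ J
    · have hstep := hJ (b+1) hmem (by omega)
      have hd : Del ε c (b+1-1) (b+1) = ε (c b) (c (b+1)) := by
        have hb1 : b + 1 - 1 = b := by ring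
        rw [hb1, del_single]
      rw [hd] at hstep
      have hb1 : b + 1 - 1 = b := by ring
      rw [hb1] at hstep
      rw [if_pos hmem] at hbet
      linarith
    · have hstep := hchain b (by omega) (by omega)
      rw [if_neg hmem] at hbet
      linarith

lemma phi_mono (hε1 : ∀ x y, ε x y ≤ 1)
    (hchain : ∀ k, 1 ≤ k → k < s → ε (c k) (c (k + 1)) ≤ l k - l (k + 1))
    (hJ : ∀ j ∈ J, 2 ≤ j → Del ε c (j - 1) j < l (j - 1) - l j)
    (hJsub : ∀ x ∈ J, 1 ≤ x ∧ x ≤ s)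
    {j j' : ℤ} (i : ℤ) (hj : j ∈ J) (hj' : j' ∈ J) (hle : j ≤ j') :
    Phi ε c l J j' i ≤ Phi ε c l J j i := by
  have h1 : 1 ≤ j := (hJsub j hj).1
  have hb := ltel ε c l s J hchain hJ h1 j' hle (hJsub j' hj').2
  have hbetJ : Bet J (j+1) (j'+1) = Bet J j j' := by
    have e1 := bet_add J j (j+1) (j'+1)
    have e2 := bet_add J j j' (j'+1)
    rw [bet_single, if_pos hj] at e1
    have e3 : Bet J j' (j'+1) = 1 := by rw [bet_single, if_pos hj']
    linarith
  have hbb : Bet J j i = Bet J j j' + Bet J j' i := (bet_add J j j' i).symm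
  have hbpos : 0 ≤ Bet J j j' := bet_nonneg J hle
  have hd1 : Del ε c j (i+1) = Del ε c j j' + Del ε c j' (i+1) := (del_add ε c j j' (i+1)).symm
  have hd2 : Del ε c (i+1-Bet J j i) (i+1) =
      Del ε c (i+1-Bet J j i) (i+1-Bet J j' i) + Del ε c (i+1-Bet J j' i) (i+1) :=
    (del_add ε c _ _ _).symm
  have hdle : Del ε c (i+1-Bet J j i) (i+1-Bet J j' i) ≤
      (i+1-Bet J j' i) - (i+1-Bet J j i) := del_le_sub ε c hε1 (by omega)
  unfold Phi
  linarith

/-- telescoping over a run of consecutive secondary particles -/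
lemma tel_s15 (σ : Equiv.Perm ℤ) (I : Finset ℤ)
    (hII'' : ∀ m, m ∈ I.image (fun x => σ x) → m + 2 ∈ I.image (fun x => σ x) →
      ε (c (m + 1)) (c (m + 2)) + ε (c (m + 2)) (c (m + 3)) ≤
        Lpp ε c l σ (m + 1) - Lpp ε c l σ (m + 3))
    (a : ℤ) : ∀ t : ℕ, (∀ u : ℕ, u ≤ t → a + 2*(u:ℤ) ∈ I.image (fun x => σ x)) →
    Del ε c (a+1) (a+2*(t:ℤ)+1) ≤ Lpp ε c l σ (a+1) - Lpp ε c l σ (a+2*(t:ℤ)+1) := by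
  intro t
  induction t with
  | zero =>
    intro _
    push_cast
    simp only [mul_zero, add_zero]
    rw [del_self]
    omega
  | succ t ih =>
    intro hmem
    have h1 := ih (fun u hu => hmem u (by omega))
    have hm1 := hmem t (by omega)
    have hm2' : a + 2*(t:ℤ) + 2 ∈ I.image (fun x => σ x) := by
      have hm2 := hmem (t+1) (le_refl _)
      push_cast at hm2
      have e : a + 2 * ((t:ℤ)+1) = a + 2*(t:ℤ)+2 := by ring
      rwa [e] at hm2
    have h2 := hII'' (a + 2*(t:ℤ)) hm1 hm2'
    have hd1 := del_add ε c (a+1) (a+2*(t:ℤ)+1) (a+2*(t:ℤ)+2)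
    have hd2 := del_add ε c (a+1) (a+2*(t:ℤ)+2) (a+2*(t:ℤ)+3)
    have hs1 : Del ε c (a+2*(t:ℤ)+1) (a+2*(t:ℤ)+2) = ε (c (a+2*(t:ℤ)+1)) (c (a+2*(t:ℤ)+2)) := by
      have h := del_single ε c (a+2*(t:ℤ)+1)
      rwa [show a+2*(t:ℤ)+1+1 = a+2*(t:ℤ)+2 from by ring] at h
    have hs2 : Del ε c (a+2*(t:ℤ)+2) (a+2*(t:ℤ)+3) = ε (c (a+2*(t:ℤ)+2)) (c (a+2*(t:ℤ)+3)) := by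
      have h := del_single ε c (a+2*(t:ℤ)+2)
      rwa [show a+2*(t:ℤ)+2+1 = a+2*(t:ℤ)+3 from by ring] at h
    have hgoal : a + 2*((t:ℕ)+1:ℤ) + 1 = a+2*(t:ℤ)+3 := by push_cast; ring
    have e1 : (a + 2*(t:ℤ)) + 1 = a + 2*(t:ℤ) + 1 := rfl
    have e2 : (a + 2*(t:ℤ)) + 2 = a + 2*(t:ℤ) + 2 := rfl
    have e3 : (a + 2*(t:ℤ)) + 3 = a + 2*(t:ℤ) + 3 := rfl
    rw [e1, e2, e3] at h2
    push_cast
    push_cast at h1 ⊢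
    have hg2 : a + 2*((t:ℤ)+1) + 1 = a+2*(t:ℤ)+3 := by ring
    rw [hg2]
    linarith

end Tel

set_option maxHeartbeats 1000000 in
/-- Proposition 4.6 (final positions for `Φ`): if the rearranged sequence given by `σ`
(primary particles at positions `σ(J)`, secondary particles occupying positions
`σ(i), σ(i)+1` for `i ∈ I`) has all consecutive particles related by `≫_ε`, then for all
`(j,i) ∈ J × I`, `σ(j) < σ(i) ⟺ φ(j,i) ≥ 0`. -/
theorem statement15 {C : Type*} (ε : C → C → ℤ)
    (hε : ∀ c c', ε c c' = 0 ∨ ε c c' = 1)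
    (s : ℤ) (l : ℤ → ℤ) (c : ℤ → C) (I J : Finset ℤ)
    (hchain : ∀ k, 1 ≤ k → k < s → ε (c k) (c (k + 1)) ≤ l k - l (k + 1))
    (hd1 : Disjoint I (I.image (· + 1))) (hd2 : Disjoint I J)
    (hd3 : Disjoint (I.image (· + 1)) J)
    (hu : I ∪ I.image (· + 1) ∪ J = Finset.Icc 1 s)
    (hI : ∀ i ∈ I, l i - l (i + 1) = Del ε c i (i + 1))
    (hJ : ∀ j ∈ J, 2 ≤ j → Del ε c (j - 1) j < l (j - 1) - l j)
    (σ : Equiv.Perm ℤ)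
    (hσmaps : ∀ k ∈ Finset.Icc 1 s, σ k ∈ Finset.Icc 1 s)
    (hσJ : ∀ j ∈ J, ∀ j' ∈ J, j < j' → σ j < σ j')
    (hσI : ∀ i ∈ I, ∀ i' ∈ I, i < i' → σ i < σ i')
    (hσI1 : ∀ i ∈ I, σ (i + 1) = σ i + 1)
    -- the rearranged sequence is well related by `≫_ε`:
    (hJJ'' : ∀ m, m ∈ J.image (fun x => σ x) → m + 1 ∈ J.image (fun x => σ x) →
      ε (c m) (c (m + 1)) < Lpp ε c l σ m - Lpp ε c l σ (m + 1))
    (hJI'' : ∀ m, m ∈ J.image (fun x => σ x) → m + 1 ∈ I.image (fun x => σ x) →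
      ε (c m) (c (m + 1)) + ε (c (m + 1)) (c (m + 2)) ≤
        Lpp ε c l σ m - (2 * Lpp ε c l σ (m + 2) + ε (c (m + 1)) (c (m + 2))))
    (hIJ'' : ∀ m, m ∈ I.image (fun x => σ x) → m + 2 ∈ J.image (fun x => σ x) →
      ε (c m) (c (m + 1)) + ε (c (m + 1)) (c (m + 2)) <
        (2 * Lpp ε c l σ (m + 1) + ε (c m) (c (m + 1))) - Lpp ε c l σ (m + 2))
    (hII'' : ∀ m, m ∈ I.image (fun x => σ x) → m + 2 ∈ I.image (fun x => σ x) →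
      ε (c (m + 1)) (c (m + 2)) + ε (c (m + 2)) (c (m + 3)) ≤
        Lpp ε c l σ (m + 1) - Lpp ε c l σ (m + 3)) :
    ∀ j ∈ J, ∀ i ∈ I, (σ j < σ i ↔ 0 ≤ Phi ε c l J j i) := by
  intro j hj i hi
  have hinj : Function.Injective (fun x : ℤ => σ x) := fun a b hab => σ.injective hab
  have hε0 : ∀ x y, 0 ≤ ε x y := fun x y => by rcases hε x y with h | h <;> omega
  have hε1 : ∀ x y, ε x y ≤ 1 := fun x y => by rcases hε x y with h | h <;> omega
  -- subset facts
  have hIsub : I ⊆ Finset.Icc 1 s := by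
    rw [← hu]; intro x hx
    exact Finset.mem_union_left _ (Finset.mem_union_left _ hx)
  have hI1sub : I.image (· + 1) ⊆ Finset.Icc 1 s := by
    rw [← hu]; intro x hx
    exact Finset.mem_union_left _ (Finset.mem_union_right _ hx)
  have hJsub : J ⊆ Finset.Icc 1 s := by
    rw [← hu]; intro x hx; exact Finset.mem_union_right _ hx
  have hJbounds : ∀ x ∈ J, 1 ≤ x ∧ x ≤ s := fun x hx => by
    have := hJsub hx; rw [Finset.mem_Icc] at this; exact this
  have hIbounds : ∀ x ∈ I, 1 ≤ x ∧ x + 1 ≤ s := fun x hx => by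
    have h1 := hIsub hx; rw [Finset.mem_Icc] at h1
    have h2 : x + 1 ∈ I.image (· + 1) := Finset.mem_image.2 ⟨x, hx, rfl⟩
    have h3 := hI1sub h2; rw [Finset.mem_Icc] at h3
    exact ⟨h1.1, h3.2⟩
  have hi1 : 1 ≤ i := (hIbounds i hi).1
  have his : i + 1 ≤ s := (hIbounds i hi).2
  have hj1 : 1 ≤ j := (hJbounds j hj).1
  have hjs : j ≤ s := (hJbounds j hj).2
  -- σ is a bijection of [1,s]
  have himg : (Finset.Icc 1 s).image (fun x => σ x) = Finset.Icc 1 s := by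
    apply Finset.eq_of_subset_of_card_le
    · intro p hp
      obtain ⟨k, hk, rfl⟩ := Finset.mem_image.1 hp
      exact hσmaps k hk
    · rw [Finset.card_image_of_injective _ hinj]
  have hsurj : ∀ p ∈ Finset.Icc 1 s, ∃ k ∈ Finset.Icc 1 s, σ k = p := by
    intro p hp
    rw [← himg] at hp
    obtain ⟨k, hk, hkp⟩ := Finset.mem_image.1 hp
    exact ⟨k, hk, hkp⟩
  -- order preservation on K = I ∪ (I+1)
  have hσK : ∀ a, (a ∈ I ∪ I.image (· + 1)) → ∀ b, (b ∈ I ∪ I.image (· + 1)) → a < b →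
      σ a < σ b := by
    intro a ha b hb hab
    rw [Finset.mem_union] at ha hb
    rcases ha with ha | ha
    · rcases hb with hb | hb
      · exact hσI a ha b hb hab
      · obtain ⟨ib, hib, rfl⟩ := Finset.mem_image.1 hb
        rcases eq_or_lt_of_le (show a ≤ ib by omega) with heq | h
        · subst heq
          rw [hσI1 a ha]
          exact lt_add_one _
        · have h1 := hσI a ha ib hib h
          rw [hσI1 ib hib]
          linarith
    · obtain ⟨ia, hia, rfl⟩ := Finset.mem_image.1 ha
      rcases hb with hb | hb
      · have h1 : ia < b := by omega
        have h2 := hσI ia hia b hb h1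
        have h3 : σ (ia + 1) ≠ σ b := fun hh => by
          have := σ.injective hh; omega
        rw [hσI1 ia hia] at h3 ⊢
        rcases lt_or_eq_of_le (Int.add_one_le_iff.2 h2) with h4 | h4
        · exact h4
        · exact absurd h4 h3
      · obtain ⟨ib, hib, rfl⟩ := Finset.mem_image.1 hb
        have h1 : ia < ib := by omega
        have h2 := hσI ia hia ib hib h1
        rw [hσI1 ia hia, hσI1 ib hib]
        linarith
  have hiK : i ∈ I ∪ I.image (· + 1) := Finset.mem_union_left _ hi
  have hi1K : i + 1 ∈ I ∪ I.image (· + 1) :=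
    Finset.mem_union_right _ (Finset.mem_image.2 ⟨i, hi, rfl⟩)
  -- counting
  have hcnt : ∀ X : ℤ, 1 ≤ X → X ≤ s + 1 →
      (((Finset.Icc 1 s).filter (fun k => σ k < X)).card : ℤ) = X - 1 := by
    intro X h1 h2
    have himgf : ((Finset.Icc 1 s).filter (fun k => σ k < X)).image (fun x => σ x)
        = (Finset.Icc 1 s).filter (fun p => p < X) := by
      ext p
      simp only [Finset.mem_image, Finset.mem_filter]
      constructor
      · rintro ⟨k, ⟨hk, hklt⟩, rfl⟩
        exact ⟨hσmaps k hk, hklt⟩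
      · rintro ⟨hp, hplt⟩
        obtain ⟨k, hk, rfl⟩ := hsurj p hp
        exact ⟨k, ⟨hk, hplt⟩, rfl⟩
    have hcard : ((Finset.Icc 1 s).filter (fun k => σ k < X)).card
        = ((Finset.Icc 1 s).filter (fun p => p < X)).card := by
      rw [← himgf, Finset.card_image_of_injective _ hinj]
    have heq : (Finset.Icc 1 s).filter (fun p => p < X) = Finset.Icc 1 (X-1) := by
      ext x
      simp only [Finset.mem_filter, Finset.mem_Icc]
      omega
    rw [hcard, heq, Int.card_Icc]
    omega
  have hcnt' : ∀ X : ℤ, 1 ≤ X → X ≤ s + 1 →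
      (((Finset.Icc 1 s).filter (fun k => k < X)).card : ℤ) = X - 1 := by
    intro X h1 h2
    have heq : (Finset.Icc 1 s).filter (fun k => k < X) = Finset.Icc 1 (X-1) := by
      ext x
      simp only [Finset.mem_filter, Finset.mem_Icc]
      omega
    rw [heq, Int.card_Icc]
    omega
  have hdKJ : Disjoint (I ∪ I.image (· + 1)) J := Finset.disjoint_union_left.2 ⟨hd2, hd3⟩
  have hsplit : ∀ p : ℤ → Prop, ∀ inst : DecidablePred p,
      ((Finset.Icc 1 s).filter p).card
      = ((I ∪ I.image (· + 1)).filter p).card + (J.filter p).card := by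
    intro p inst
    rw [← hu, Finset.filter_union, Finset.card_union_of_disjoint
      (Finset.disjoint_filter_filter hdKJ)]
  -- structural helpers about images
  have hSIJ : ∀ q, q ∈ I.image (fun x => σ x) → q ∈ J.image (fun x => σ x) → False := by
    intro q h1 h2
    obtain ⟨a, ha, hqa⟩ := Finset.mem_image.1 h1
    obtain ⟨b, hb, hqb⟩ := Finset.mem_image.1 h2
    have : a = b := σ.injective (by rw [hqa, hqb])
    subst this
    exact Finset.disjoint_left.mp hd2 ha hb
  have hcons : ∀ q, q ∈ I.image (fun x => σ x) → q + 1 ∈ I.image (fun x => σ x) → False := by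
    intro q h1 h2
    obtain ⟨a, ha, hqa⟩ := Finset.mem_image.1 h1
    obtain ⟨b, hb, hqb⟩ := Finset.mem_image.1 h2
    have hab : σ (a + 1) = σ b := by rw [hσI1 a ha, hqa, hqb]
    have : a + 1 = b := σ.injective hab
    subst this
    exact Finset.disjoint_left.mp hd1 hb (Finset.mem_image.2 ⟨a, ha, rfl⟩)
  have hconsJ : ∀ q, q ∈ I.image (fun x => σ x) → q + 1 ∈ J.image (fun x => σ x) → False := by
    intro q h1 h2
    obtain ⟨a, ha, hqa⟩ := Finset.mem_image.1 h1
    obtain ⟨b, hb, hqb⟩ := Finset.mem_image.1 h2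
    have hab : σ (a + 1) = σ b := by rw [hσI1 a ha, hqa, hqb]
    have : a + 1 = b := σ.injective hab
    subst this
    exact Finset.disjoint_left.mp hd3 (Finset.mem_image.2 ⟨a, ha, rfl⟩) hb
  have hcover : ∀ p, 1 ≤ p → p ≤ s →
      p ∈ J.image (fun x => σ x) ∨ p ∈ I.image (fun x => σ x) ∨
      ∃ q, q ∈ I.image (fun x => σ x) ∧ p = q + 1 := by
    intro p h1 h2
    obtain ⟨k, hk, hkp⟩ := hsurj p (Finset.mem_Icc.2 ⟨h1, h2⟩)
    rw [← hu, Finset.mem_union, Finset.mem_union] at hk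
    rcases hk with (hk | hk) | hk
    · exact Or.inr (Or.inl (Finset.mem_image.2 ⟨k, hk, hkp⟩))
    · obtain ⟨a, ha, hak⟩ := Finset.mem_image.1 hk
      refine Or.inr (Or.inr ⟨σ a, Finset.mem_image.2 ⟨a, ha, rfl⟩, ?_⟩)
      rw [← hkp, ← hak, hσI1 a ha]
    · exact Or.inl (Finset.mem_image.2 ⟨k, hk, hkp⟩)
  -- the Phi/Lpp bridge
  have hphiL : ∀ jx : ℤ, Phi ε c l J jx i = Lpp ε c l σ (σ jx) - 2 * Lpp ε c l σ (σ i + 1)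
      - Del ε c (σ jx) (σ i + 1) + Del ε c (σ i + 1) (i + 1 - Bet J jx i) := by
    intro jx
    have h1 : σ.symm (σ jx) = jx := Equiv.symm_apply_apply σ jx
    have h2 : σ.symm (σ i + 1) = i + 1 := by
      rw [← hσI1 i hi]; exact Equiv.symm_apply_apply σ (i+1)
    simp only [Phi, Lpp, h1, h2]
    linarith [del_add ε c (σ jx) jx (i+1), del_add ε c (σ jx) (σ i + 1) (i+1),
      del_add ε c (σ i + 1) (i + 1 - Bet J jx i) (i+1)]
  have hij_ne : j ≠ i := fun h => Finset.disjoint_left.mp hd2 hi (h ▸ hj)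
  have hσji_ne : σ j ≠ σ i := fun h => hij_ne (σ.injective h)
  rcases lt_trichotomy (σ j) (σ i) with hlt | heq | hgt
  · refine ⟨fun _ => ?_, fun _ => hlt⟩
    have hσis : σ i ≤ s := (Finset.mem_Icc.1 (hσmaps i (hIsub hi))).2
    have hσi1 : 1 ≤ σ i := (Finset.mem_Icc.1 (hσmaps i (hIsub hi))).1
    have hjD1 : j ∈ J.filter (fun x => σ x < σ i) := Finset.mem_filter.2 ⟨hj, hlt⟩
    have hne : (J.filter (fun x => σ x < σ i)).Nonempty := ⟨j, hjD1⟩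
    set js := (J.filter (fun x => σ x < σ i)).max' hne with hjs_def
    have hjsD1 : js ∈ J.filter (fun x => σ x < σ i) := Finset.max'_mem _ hne
    have hjsJ : js ∈ J := (Finset.mem_filter.1 hjsD1).1
    have hjslt : σ js < σ i := (Finset.mem_filter.1 hjsD1).2
    have hjle : j ≤ js := Finset.le_max' _ j hjD1
    have hm1 : 1 ≤ σ js := (Finset.mem_Icc.1 (hσmaps js (hJsub hjsJ))).1
    have hms : σ js ≤ s := (Finset.mem_Icc.1 (hσmaps js (hJsub hjsJ))).2
    have hnp : ∀ p, σ js < p → p < σ i → p ∉ J.image (fun x => σ x) := by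
      intro p h1 h2 hp
      obtain ⟨j', hj', rfl⟩ := Finset.mem_image.1 hp
      have hj'D1 : j' ∈ J.filter (fun x => σ x < σ i) := Finset.mem_filter.2 ⟨hj', h2⟩
      have hle := Finset.le_max' _ j' hj'D1
      rcases eq_or_lt_of_le hle with heq2 | hlt2
      · rw [heq2] at h1; exact lt_irrefl _ h1
      · have := hσJ j' hj' js hjsJ hlt2
        linarith
    -- counting: σ js ≤ i - Bet J js i
    have hfJ : J.filter (fun x => σ x < σ js) = J.filter (fun x => x < js) := by
      ext x
      simp only [Finset.mem_filter]
      constructor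
      · rintro ⟨hx, hxlt⟩
        refine ⟨hx, ?_⟩
        by_contra hge
        push_neg at hge
        rcases eq_or_lt_of_le hge with heq2 | h
        · rw [heq2] at hxlt; exact lt_irrefl _ hxlt
        · have := hσJ js hjsJ x hx h; linarith
      · rintro ⟨hx, hxlt⟩
        exact ⟨hx, hσJ x hx js hjsJ hxlt⟩
    have hKsub : (I ∪ I.image (· + 1)).filter (fun k => σ k < σ js)
        ⊆ (I ∪ I.image (· + 1)).filter (fun k => k < i) := by
      intro x hx
      rw [Finset.mem_filter] at hx ⊢
      refine ⟨hx.1, ?_⟩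
      have hxi : σ x < σ i := lt_trans hx.2 hjslt
      by_contra hge
      push_neg at hge
      rcases eq_or_lt_of_le hge with heq2 | h
      · rw [heq2] at hxi; exact lt_irrefl _ hxi
      · have := hσK i hiK x hx.1 h; linarith
    have hc1 := hcnt (σ js) (by omega) (by omega)
    have hs1 := hsplit (fun k => σ k < σ js) (by infer_instance)
    have hs2 := hsplit (fun k => k < i) (by infer_instance)
    have hc2 := hcnt' i (by omega) (by omega)
    have hKle := Finset.card_le_card hKsub
    have hbetf := bet_filter J js i
    rw [hfJ] at hs1
    have hL1 : σ js ≤ i - Bet J js i := by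
      rw [hbetf]; omega
    -- structure of the run of secondaries
    have hstruct : ∀ t : ℕ, σ js + 1 + 2*(t:ℤ) ≤ σ i →
        σ js + 1 + 2*(t:ℤ) ∈ I.image (fun x => σ x) := by
      intro t
      induction t with
      | zero =>
        intro ht
        simp only [Nat.cast_zero, mul_zero, add_zero] at ht ⊢
        rcases eq_or_lt_of_le ht with heq2 | hlt2
        · rw [heq2]; exact Finset.mem_image.2 ⟨i, hi, rfl⟩
        · rcases hcover (σ js + 1) (by omega) (by omega) with h | h | ⟨q, hq, hpq⟩
          · exact absurd h (hnp _ (by omega) hlt2)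
          · exact h
          · have hqe : q = σ js := by omega
            rw [hqe] at hq
            exact absurd (Finset.mem_image.2 ⟨js, hjsJ, rfl⟩) (fun hh => hSIJ _ hq hh)
      | succ t ih =>
        intro ht
        rw [Nat.cast_add, Nat.cast_one] at ht ⊢
        have hprev : σ js + 1 + 2*(t:ℤ) ≤ σ i := by omega
        have hih := ih hprev
        have he : σ js + 1 + 2*((t:ℤ)+1) = σ js + 1 + 2*(t:ℤ) + 2 := by ring
        rw [he] at ht ⊢
        rcases eq_or_lt_of_le ht with heq2 | hlt2
        · rw [heq2]; exact Finset.mem_image.2 ⟨i, hi, rfl⟩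
        · rcases hcover (σ js + 1 + 2*(t:ℤ) + 2) (by omega) (by omega) with h | h | ⟨q, hq, hpq⟩
          · exact absurd h (hnp _ (by omega) hlt2)
          · exact h
          · have hqe : q = σ js + 1 + 2*(t:ℤ) + 1 := by omega
            rw [hqe] at hq
            exact absurd hq (fun hh => hcons _ hih hh)
    -- parity
    have hpar : ∃ t : ℕ, σ i = σ js + 1 + 2*(t:ℤ) := by
      rcases Int.even_or_odd (σ i - σ js - 1) with ⟨r, hr⟩ | ⟨r, hr⟩
      · exact ⟨r.toNat, by omega⟩
      · exfalso
        have h1 := hstruct r.toNat (by omega)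
        have h2 : σ js + 1 + 2*(r.toNat:ℤ) + 1 = σ i := by omega
        have h3 : σ i ∈ I.image (fun x => σ x) := Finset.mem_image.2 ⟨i, hi, rfl⟩
        rw [← h2] at h3
        exact hcons _ h1 h3
    obtain ⟨t, hti⟩ := hpar
    -- chain of inequalities
    have h0 := hstruct 0 (by simp only [Nat.cast_zero, mul_zero, add_zero]; omega)
    simp only [Nat.cast_zero, mul_zero, add_zero] at h0
    have hbase := hJI'' (σ js) (Finset.mem_image.2 ⟨js, hjsJ, rfl⟩) h0
    have htel := tel_s15 ε c l σ I hII'' (σ js + 1) t (fun u hu => by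
      have hu' : (u:ℤ) ≤ (t:ℤ) := by exact_mod_cast hu
      exact hstruct u (by omega))
    rw [show σ js + 1 + 1 = σ js + 2 from by ring] at htel
    rw [show σ js + 1 + 2*(t:ℤ) + 1 = σ i + 1 from by omega] at htel
    have hd1' := del_add ε c (σ js) (σ js + 1) (σ i + 1)
    have hd2' := del_add ε c (σ js + 1) (σ js + 2) (σ i + 1)
    have hsing1 := del_single ε c (σ js)
    have hsing2 := del_single ε c (σ js + 1)
    rw [show σ js + 1 + 1 = σ js + 2 from by ring] at hsing2
    have hdNA := del_add ε c (σ js + 1) (σ i + 1) (i + 1 - Bet J js i)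
    have hnn := del_nonneg ε c hε0 (show σ js + 1 ≤ i + 1 - Bet J js i by linarith)
    have hphijs : 0 ≤ Phi ε c l J js i := by
      rw [hphiL js]
      linarith
    have hmono := phi_mono ε c l s J hε1 hchain hJ hJbounds i hj hjsJ hjle
    linarith
  · exact absurd heq hσji_ne
  · have hneg : Phi ε c l J j i < 0 := by
      have hσis : σ i ≤ s := (Finset.mem_Icc.1 (hσmaps i (hIsub hi))).2
      have hσi1 : 1 ≤ σ i := (Finset.mem_Icc.1 (hσmaps i (hIsub hi))).1
      have hjD2 : j ∈ J.filter (fun x => σ i < σ x) := Finset.mem_filter.2 ⟨hj, hgt⟩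
      have hne : (J.filter (fun x => σ i < σ x)).Nonempty := ⟨j, hjD2⟩
      obtain ⟨jh, hjhD2, hjhmin⟩ : ∃ y, y ∈ J.filter (fun x => σ i < σ x) ∧
          ∀ x ∈ J.filter (fun x => σ i < σ x), y ≤ x :=
        ⟨_, Finset.min'_mem _ hne, fun x hx => Finset.min'_le _ x hx⟩
      have hjhJ : jh ∈ J := (Finset.mem_filter.1 hjhD2).1
      have hjhgt : σ i < σ jh := (Finset.mem_filter.1 hjhD2).2
      have hjge : jh ≤ j := hjhmin j hjD2
      have hm1 : 1 ≤ σ jh := (Finset.mem_Icc.1 (hσmaps jh (hJsub hjhJ))).1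
      have hms : σ jh ≤ s := (Finset.mem_Icc.1 (hσmaps jh (hJsub hjhJ))).2
      have hnp : ∀ p, σ i < p → p < σ jh → p ∉ J.image (fun x => σ x) := by
        intro p h1 h2 hp
        obtain ⟨j', hj', rfl⟩ := Finset.mem_image.1 hp
        have hj'D2 : j' ∈ J.filter (fun x => σ i < σ x) := Finset.mem_filter.2 ⟨hj', h1⟩
        have hle := hjhmin j' hj'D2
        rcases eq_or_lt_of_le hle with heq2 | hlt2
        · rw [heq2] at h2
          exact lt_irrefl _ h2
        · have := hσJ jh hjhJ j' hj' hlt2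
          linarith
      have hstep2 : σ i + 2 ≤ σ jh := by
        rcases eq_or_lt_of_le (show σ i + 1 ≤ σ jh by omega) with heq2 | h
        · exfalso
          have hσeq : σ (i+1) = σ jh := by rw [hσI1 i hi]; omega
          have hji : i + 1 = jh := σ.injective hσeq
          exact Finset.disjoint_left.mp hd3 (Finset.mem_image.2 ⟨i, hi, rfl⟩) (hji ▸ hjhJ)
        · omega
      -- counting: i + 2 - Bet J jh i ≤ σ jh
      have hfJ : J.filter (fun x => σ x < σ jh) = J.filter (fun x => x < jh) := by
        ext x
        simp only [Finset.mem_filter]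
        constructor
        · rintro ⟨hx, hxlt⟩
          refine ⟨hx, ?_⟩
          by_contra hge
          push_neg at hge
          rcases eq_or_lt_of_le hge with heq2 | h
          · rw [heq2] at hxlt; exact lt_irrefl _ hxlt
          · have := hσJ jh hjhJ x hx h; linarith
        · rintro ⟨hx, hxlt⟩
          exact ⟨hx, hσJ x hx jh hjhJ hxlt⟩
      have hKsub : (I ∪ I.image (· + 1)).filter (fun k => k < i + 2)
          ⊆ (I ∪ I.image (· + 1)).filter (fun k => σ k < σ jh) := by
        intro x hx
        rw [Finset.mem_filter] at hx ⊢
        refine ⟨hx.1, ?_⟩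
        rcases eq_or_lt_of_le (show x ≤ i + 1 by omega) with heq2 | h
        · rw [heq2, hσI1 i hi]
          linarith
        · have := hσK x hx.1 (i+1) hi1K h
          rw [hσI1 i hi] at this
          linarith
      have hJfe : J.filter (fun x => x < i + 2) = J.filter (fun x => x < i) := by
        ext x
        simp only [Finset.mem_filter]
        constructor
        · rintro ⟨hx, hxlt⟩
          refine ⟨hx, ?_⟩
          have hxi : x ≠ i := fun hh => Finset.disjoint_left.mp hd2 hi (hh ▸ hx)
          have hxi1 : x ≠ i + 1 := fun hh =>
            Finset.disjoint_left.mp hd3 (Finset.mem_image.2 ⟨i, hi, rfl⟩) (hh ▸ hx)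
          omega
        · rintro ⟨hx, hxlt⟩
          exact ⟨hx, by omega⟩
      have hc1 := hcnt (σ jh) (by omega) (by omega)
      have hs1 := hsplit (fun k => σ k < σ jh) (by infer_instance)
      have hs2 := hsplit (fun k => k < i + 2) (by infer_instance)
      have hc2 := hcnt' (i + 2) (by omega) (by omega)
      have hKle := Finset.card_le_card hKsub
      have hbetf := bet_filter J jh i
      rw [hfJ] at hs1
      rw [hJfe] at hs2
      have hL2 : i + 2 - Bet J jh i ≤ σ jh := by rw [hbetf]; omega
      -- structure of the run of secondaries after σ i
      have hstruct : ∀ t : ℕ, σ i + 2*(t:ℤ) < σ jh → σ i + 2*(t:ℤ) ∈ I.image (fun x => σ x) := by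
        intro t
        induction t with
        | zero =>
          intro _
          simp only [Nat.cast_zero, mul_zero, add_zero]
          exact Finset.mem_image.2 ⟨i, hi, rfl⟩
        | succ t ih =>
          intro ht
          rw [Nat.cast_add, Nat.cast_one] at ht ⊢
          have he : σ i + 2*((t:ℤ)+1) = σ i + 2*(t:ℤ) + 2 := by ring
          rw [he] at ht ⊢
          have hih := ih (by omega)
          rcases hcover (σ i + 2*(t:ℤ) + 2) (by omega) (by omega) with h | h | ⟨q, hq, hpq⟩
          · exact absurd h (hnp _ (by omega) ht)
          · exact h
          · have hqe : q = σ i + 2*(t:ℤ) + 1 := by omega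
            rw [hqe] at hq
            exact absurd hq (fun hh => hcons _ hih hh)
      -- parity
      have hpar : ∃ r : ℕ, σ jh = σ i + 2*(r:ℤ) + 2 := by
        rcases Int.even_or_odd (σ jh - σ i) with ⟨r, hr⟩ | ⟨r, hr⟩
        · exact ⟨(r-1).toNat, by omega⟩
        · exfalso
          have hr1 : 1 ≤ r := by omega
          have h1 := hstruct r.toNat (by omega)
          have h2 : σ i + 2*(r.toNat:ℤ) + 1 = σ jh := by omega
          have h3 : σ jh ∈ J.image (fun x => σ x) := Finset.mem_image.2 ⟨jh, hjhJ, rfl⟩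
          rw [← h2] at h3
          exact hconsJ _ h1 h3
      obtain ⟨r, hri⟩ := hpar
      -- chain of inequalities
      have htel := tel_s15 ε c l σ I hII'' (σ i) r (fun u hu => by
        have hu' : (u:ℤ) ≤ (r:ℤ) := by exact_mod_cast hu
        exact hstruct u (by omega))
      have hlast := hstruct r (by omega)
      have hfin := hIJ'' (σ i + 2*(r:ℤ)) hlast (by
        rw [show σ i + 2*(r:ℤ) + 2 = σ jh from by omega]
        exact Finset.mem_image.2 ⟨jh, hjhJ, rfl⟩)
      rw [show σ i + 2*(r:ℤ) + 2 = σ jh from by omega] at hfin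
      have hfin' := Int.lt_iff_add_one_le.mp hfin
      have hphijh := hphiL jh
      have hda := del_neg ε c (σ jh) (σ i + 1)
      have hdb := del_add ε c (σ i + 1) (σ i + 2*(r:ℤ) + 1) (σ jh)
      have hdc := del_single ε c (σ i + 2*(r:ℤ) + 1)
      rw [show σ i + 2*(r:ℤ) + 1 + 1 = σ jh from by omega] at hdc
      have hdd := del_add ε c (σ i + 1) (i + 1 - Bet J jh i) (σ i + 2*(r:ℤ) + 1)
      have hde := del_nonneg ε c hε0
        (show i + 1 - Bet J jh i ≤ σ i + 2*(r:ℤ) + 1 by linarith)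
      have hphineg : Phi ε c l J jh i ≤ -1 := by
        rw [hphijh]
        linarith
      have hmono := phi_mono ε c l s J hε1 hchain hJ hJbounds i hjhJ hj hjge
      linarith
    exact ⟨fun h => absurd h (lt_asymm hgt), fun h => absurd h (not_le.2 hneg)⟩
end
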